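/- Let μ be a distribution on a product space Ω = Ω₁'×⋯×Ωₙ' which admits a mixture decomposition μ = ∫ μ_y dπ(y) with E_{μ_y}[f] = E_μ[f] π-a.s., where each component μ_y satisfies C-approximate tensorization of entropy. Then Ent_μ[f] ≤ C · Σ_{i=1}ⁿ E_{x∼μ}[Ent_{μ(X_i=·|X_{∼i}=x_{∼i})}[f]]; i.e., μ satisfies C-approximate tensorization of entropy for this f. -/

import Mathlib

open Finset

/-- Entropy of a nonnegative function `f` with respect to a mass function `μ`. -/
noncomputable def ent {Ω : Type*} [Fintype Ω] (μ f : Ω → ℝ) : ℝ :=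
  ∑ x, μ x * (f x * Real.log (f x)) -
    (∑ x, μ x * f x) * Real.log (∑ x, μ x * f x)

/-- Expected conditional entropy of coordinate `i`:
`E_{x∼μ}[Ent_{μ(X_i=· | X_{∼i}=x_{∼i})}[f]]`. -/
noncomputable def condEnt {n : ℕ} {Ω' : Fin n → Type*} [∀ i, Fintype (Ω' i)]
    (μ f : (∀ i, Ω' i) → ℝ) (i : Fin n) : ℝ :=
  ∑ x, μ x *
    ent (fun a : Ω' i => μ (Function.update x i a) / ∑ b, μ (Function.update x i b))
      (fun a : Ω' i => f (Function.update x i a))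

/-- `C`-approximate tensorization of entropy for a distribution on a product space. -/
def ApproxTensorization {n : ℕ} {Ω' : Fin n → Type*} [∀ i, Fintype (Ω' i)]
    (C : ℝ) (ν : (∀ i, Ω' i) → ℝ) : Prop :=
  ∀ f : (∀ i, Ω' i) → ℝ, (∀ x, 0 ≤ f x) → ent ν f ≤ C * ∑ i, condEnt ν f i

/-- Jensen: entropy of a nonnegative function w.r.t. a probability vector is nonnegative. -/
lemma ent_nonneg {Ω : Type*} [Fintype Ω] (μ f : Ω → ℝ) (hμ : ∀ x, 0 ≤ μ x)
    (hμ1 : ∑ x, μ x = 1) (hf : ∀ x, 0 ≤ f x) : 0 ≤ ent μ f := by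
  have h := Real.convexOn_mul_log.map_sum_le (t := Finset.univ) (w := μ) (p := f)
    (fun x _ => hμ x) hμ1 (fun x _ => hf x)
  simp only [smul_eq_mul] at h
  have h' : (∑ x, μ x * f x) * Real.log (∑ x, μ x * f x)
      ≤ ∑ x, μ x * (f x * Real.log (f x)) := h
  unfold ent
  linarith

/-- Algebraic identity: entropy of a mixture decomposes as average entropy plus
entropy of the means. -/
lemma ent_mixture {Ω Y : Type*} [Fintype Ω] [Fintype Y] (w : Y → ℝ) (ν : Y → Ω → ℝ)
    (f : Ω → ℝ) :
    ent (fun x => ∑ y, w y * ν y x) f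
      = ∑ y, w y * ent (ν y) f + ent w (fun y => ∑ x, ν y x * f x) := by
  unfold ent
  have h1 : ∑ x, (∑ y, w y * ν y x) * (f x * Real.log (f x))
      = ∑ y, w y * ∑ x, ν y x * (f x * Real.log (f x)) := by
    simp only [Finset.sum_mul, Finset.mul_sum]
    rw [Finset.sum_comm]
    simp [mul_assoc]
  have h2 : ∑ x, (∑ y, w y * ν y x) * f x = ∑ y, w y * ∑ x, ν y x * f x := by
    simp only [Finset.sum_mul, Finset.mul_sum]
    rw [Finset.sum_comm]
    simp [mul_assoc]
  rw [h1, h2]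
  simp only [mul_sub, Finset.sum_sub_distrib]
  ring

/-- Key inequality: for a mixture, the weighted sum of scaled fiber entropies is at most
the scaled entropy of the mixture. -/
lemma scaled_ent_mixture_le {A Y : Type*} [Fintype A] [Fintype Y]
    (w : Y → ℝ) (hw : ∀ y, 0 ≤ w y)
    (ν : Y → A → ℝ) (hν : ∀ y a, 0 ≤ ν y a)
    (f : A → ℝ) (hf : ∀ a, 0 ≤ f a) :
    ∑ y, w y * ((∑ b, ν y b) * ent (fun a => ν y a / ∑ b, ν y b) f)
      ≤ (∑ b, ∑ y, w y * ν y b) *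
        ent (fun a => (∑ y, w y * ν y a) / ∑ b, ∑ y, w y * ν y b) f := by
  set Sy : Y → ℝ := fun y => ∑ b, ν y b with hSy
  have hS : ∑ b, ∑ y, w y * ν y b = ∑ y, w y * Sy y := by
    rw [Finset.sum_comm]
    simp [hSy, Finset.mul_sum]
  have hSynn : ∀ y, 0 ≤ Sy y := fun y => Finset.sum_nonneg fun b _ => hν y b
  by_cases h0 : ∑ y, w y * Sy y = 0
  · -- degenerate case: everything is zero
    have hterm : ∀ y, w y * Sy y = 0 := by
      intro y
      exact (Finset.sum_eq_zero_iff_of_nonneg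
        (fun y _ => mul_nonneg (hw y) (hSynn y))).1 h0 y (Finset.mem_univ y)
    have hL : ∑ y, w y * ((Sy y) * ent (fun a => ν y a / Sy y) f) = 0 := by
      apply Finset.sum_eq_zero
      intro y _
      rcases mul_eq_zero.1 (hterm y) with h | h
      · rw [h, zero_mul]
      · rw [h, zero_mul, mul_zero]
    rw [hL, hS, h0, zero_mul]
  · have hSpos : 0 < ∑ y, w y * Sy y :=
      lt_of_le_of_ne (Finset.sum_nonneg fun y _ => mul_nonneg (hw y) (hSynn y))
        (Ne.symm h0)
    set S : ℝ := ∑ y, w y * Sy y with hSdef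
    set w' : Y → ℝ := fun y => w y * Sy y / S with hw'
    set ν' : Y → A → ℝ := fun y a => ν y a / Sy y with hν'
    have hzero : ∀ y a, Sy y = 0 → ν y a = 0 := by
      intro y a h
      exact (Finset.sum_eq_zero_iff_of_nonneg (fun b _ => hν y b)).1 h a (Finset.mem_univ a)
    have hmix : (fun a => (∑ y, w y * ν y a) / ∑ b, ∑ y, w y * ν y b)
        = fun a => ∑ y, w' y * ν' y a := by
      funext a
      rw [hS, Finset.sum_div]
      apply Finset.sum_congr rfl
      intro y _
      by_cases hy : Sy y = 0
      · simp [hw', hν', hy, hzero y a hy]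
      · simp only [hw', hν']
        field_simp
    rw [hmix, ent_mixture]
    have hw'nn : ∀ y, 0 ≤ w' y := fun y =>
      div_nonneg (mul_nonneg (hw y) (hSynn y)) hSpos.le
    have hw'1 : ∑ y, w' y = 1 := by
      simp only [hw', ← Finset.sum_div]
      rw [← hSdef, div_self h0]
    have hpos : 0 ≤ ent w' fun y => ∑ x, ν' y x * f x := by
      apply ent_nonneg _ _ hw'nn hw'1
      intro y
      exact Finset.sum_nonneg fun a _ =>
        mul_nonneg (div_nonneg (hν y a) (hSynn y)) (hf a)
    rw [hS, mul_add]
    have h1 : ∑ y, w y * ((Sy y) * ent (fun a => ν y a / Sy y) f)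
        = S * ∑ y, w' y * ent (ν' y) f := by
      rw [Finset.mul_sum]
      apply Finset.sum_congr rfl
      intro y _
      have heq : S * (w' y * ent (ν' y) f) = (w y * Sy y) * ent (ν' y) f := by
        have hcc : w' y * S = w y * Sy y := by
          simp only [hw']
          exact div_mul_cancel₀ _ h0
        calc S * (w' y * ent (ν' y) f) = (w' y * S) * ent (ν' y) f := by ring
          _ = (w y * Sy y) * ent (ν' y) f := by rw [hcc]
      rw [heq, hν']
      ring
    rw [h1]
    nlinarith [mul_nonneg hSpos.le hpos]

/-- Summing a function composed with `update · i b` over all `b` and all points counts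
each point `card (Ω' i)` times. -/
lemma sum_sum_update {n : ℕ} {Ω' : Fin n → Type*} [∀ i, Fintype (Ω' i)] (i : Fin n)
    (G : (∀ j, Ω' j) → ℝ) :
    ∑ b : Ω' i, ∑ x : ∀ j, Ω' j, G (Function.update x i b)
      = (Fintype.card (Ω' i) : ℝ) * ∑ x, G x := by
  have hinv : Function.Involutive
      (fun p : Ω' i × (∀ j, Ω' j) => (p.2 i, Function.update p.2 i p.1)) := by
    intro p
    simp [Function.update_idem, Function.update_self, Function.update_eq_self]
  have key : ∑ p : Ω' i × (∀ j, Ω' j), G (Function.update p.2 i p.1)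
      = ∑ p : Ω' i × (∀ j, Ω' j), G p.2 :=
    Fintype.sum_bijective _ hinv.bijective _ _ (fun p => rfl)
  have e1 : ∑ p : Ω' i × (∀ j, Ω' j), G (Function.update p.2 i p.1)
      = ∑ b : Ω' i, ∑ x : ∀ j, Ω' j, G (Function.update x i b) :=
    Fintype.sum_prod_type (f := fun p : Ω' i × (∀ j, Ω' j) => G (Function.update p.2 i p.1))
  have e2 : ∑ p : Ω' i × (∀ j, Ω' j), G p.2
      = ∑ _b : Ω' i, ∑ x : ∀ j, Ω' j, G x :=
    Fintype.sum_prod_type (f := fun p : Ω' i × (∀ j, Ω' j) => G p.2)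
  rw [← e1, key, e2, Finset.sum_const, nsmul_eq_mul, Finset.card_univ]

lemma card_mul_condEnt {n : ℕ} {Ω' : Fin n → Type*} [∀ i, Fintype (Ω' i)]
    (ν f : (∀ j, Ω' j) → ℝ) (i : Fin n) :
    (Fintype.card (Ω' i) : ℝ) * condEnt ν f i
      = ∑ x, (∑ b, ν (Function.update x i b)) *
          ent (fun a => ν (Function.update x i a) / ∑ b, ν (Function.update x i b))
            (fun a => f (Function.update x i a)) := by
  set g : (∀ j, Ω' j) → ℝ := fun x =>
    ent (fun a => ν (Function.update x i a) / ∑ b, ν (Function.update x i b))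
      (fun a => f (Function.update x i a)) with hg
  have hce : condEnt ν f i = ∑ x, ν x * g x := rfl
  have hginv : ∀ x b, g (Function.update x i b) = g x := by
    intro x b
    simp only [hg, Function.update_idem]
  have hkey := sum_sum_update i (fun z => ν z * g z)
  symm
  rw [hce, ← hkey, Finset.sum_comm]
  apply Finset.sum_congr rfl
  intro x _
  rw [Finset.sum_mul]
  exact Finset.sum_congr rfl fun b _ => by rw [hginv]

lemma sum_condEnt_le {n : ℕ} {Ω' : Fin n → Type*} [∀ i, Fintype (Ω' i)]
    {Y : Type*} [Fintype Y] (i : Fin n)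
    (π : Y → ℝ) (hπnn : ∀ y, 0 ≤ π y)
    (μy : Y → (∀ j, Ω' j) → ℝ) (hμynn : ∀ y x, 0 ≤ μy y x)
    (μ : (∀ j, Ω' j) → ℝ) (hμ : ∀ x, μ x = ∑ y, π y * μy y x)
    (f : (∀ j, Ω' j) → ℝ) (hf : ∀ x, 0 ≤ f x) :
    ∑ y, π y * condEnt (μy y) f i ≤ condEnt μ f i := by
  rcases isEmpty_or_nonempty (Ω' i) with hE | hNE
  · have hX : IsEmpty (∀ j, Ω' j) := ⟨fun x => hE.false (x i)⟩
    simp [condEnt, Finset.univ_eq_empty]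
  · have hk : 0 < (Fintype.card (Ω' i) : ℝ) := by
      exact_mod_cast Fintype.card_pos
    rw [← mul_le_mul_iff_right₀ hk, card_mul_condEnt, Finset.mul_sum]
    have hterm : ∀ y, (Fintype.card (Ω' i) : ℝ) * (π y * condEnt (μy y) f i)
        = π y * ∑ x, (∑ b, μy y (Function.update x i b)) *
            ent (fun a => μy y (Function.update x i a) / ∑ b, μy y (Function.update x i b))
              (fun a => f (Function.update x i a)) := by
      intro y
      rw [mul_left_comm, card_mul_condEnt]
    simp_rw [hterm, Finset.mul_sum]
    rw [Finset.sum_comm]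
    apply Finset.sum_le_sum
    intro x _
    have key := scaled_ent_mixture_le π hπnn
      (fun y a => μy y (Function.update x i a)) (fun y a => hμynn y _)
      (fun a => f (Function.update x i a)) (fun a => hf _)
    simp only [hμ]
    exact key

theorem approx_tensorization_of_mixture
    {n : ℕ} {Ω' : Fin n → Type*} [∀ i, Fintype (Ω' i)]
    {Y : Type*} [Fintype Y]
    (π : Y → ℝ) (hπnn : ∀ y, 0 ≤ π y) (hπ1 : ∑ y, π y = 1)
    (μy : Y → (∀ i, Ω' i) → ℝ) (hμynn : ∀ y x, 0 ≤ μy y x) (hμy1 : ∀ y, ∑ x, μy y x = 1)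
    (μ : (∀ i, Ω' i) → ℝ) (hμ : ∀ x, μ x = ∑ y, π y * μy y x)
    (C : ℝ) (hC : 1 ≤ C)
    (hate : ∀ y, π y ≠ 0 → ApproxTensorization C (μy y))
    (f : (∀ i, Ω' i) → ℝ) (hf : ∀ x, 0 ≤ f x)
    (hconst : ∀ y, π y ≠ 0 → ∑ x, μy y x * f x = ∑ x, μ x * f x) :
    ent μ f ≤ C * ∑ i, condEnt μ f i := by
  have hμfun : μ = fun x => ∑ y, π y * μy y x := funext hμ
  have hmixent : ent μ f = ∑ y, π y * ent (μy y) f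
      + ent π (fun y => ∑ x, μy y x * f x) := by
    conv_lhs => rw [hμfun]
    exact ent_mixture π μy f
  set M : ℝ := ∑ x, μ x * f x with hM
  have hzero : ent π (fun y => ∑ x, μy y x * f x) = 0 := by
    unfold ent
    have h1 : ∑ y, π y * ((∑ x, μy y x * f x) * Real.log (∑ x, μy y x * f x))
        = M * Real.log M := by
      have : ∀ y, π y * ((∑ x, μy y x * f x) * Real.log (∑ x, μy y x * f x))
          = π y * (M * Real.log M) := by
        intro y
        by_cases hy : π y = 0
        · rw [hy, zero_mul, zero_mul]
        · rw [hconst y hy]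
      rw [Finset.sum_congr rfl (fun y _ => this y), ← Finset.sum_mul, hπ1, one_mul]
    have h2 : ∑ y, π y * (∑ x, μy y x * f x) = M := by
      have : ∀ y, π y * (∑ x, μy y x * f x) = π y * M := by
        intro y
        by_cases hy : π y = 0
        · rw [hy, zero_mul, zero_mul]
        · rw [hconst y hy]
      rw [Finset.sum_congr rfl (fun y _ => this y), ← Finset.sum_mul, hπ1, one_mul]
    rw [h1, h2]
    ring
  have step1 : ent μ f ≤ ∑ y, π y * (C * ∑ i, condEnt (μy y) f i) := by
    rw [hmixent, hzero, add_zero]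
    apply Finset.sum_le_sum
    intro y _
    by_cases hy : π y = 0
    · rw [hy, zero_mul, zero_mul]
    · exact mul_le_mul_of_nonneg_left (hate y hy f hf) (hπnn y)
  have step2 : ∑ y, π y * (C * ∑ i, condEnt (μy y) f i)
      = C * ∑ i, ∑ y, π y * condEnt (μy y) f i := by
    rw [Finset.mul_sum]
    simp_rw [Finset.mul_sum]
    rw [Finset.sum_comm]
    apply Finset.sum_congr rfl
    intro y _
    apply Finset.sum_congr rfl
    intro i _
    ring
  have step3 : ∑ i, ∑ y, π y * condEnt (μy y) f i ≤ ∑ i, condEnt μ f i :=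
    Finset.sum_le_sum fun i _ =>
      sum_condEnt_le i π hπnn μy hμynn μ hμ f hf
  calc ent μ f ≤ ∑ y, π y * (C * ∑ i, condEnt (μy y) f i) := step1
    _ = C * ∑ i, ∑ y, π y * condEnt (μy y) f i := step2
    _ ≤ C * ∑ i, condEnt μ f i :=
        mul_le_mul_of_nonneg_left step3 (le_trans zero_le_one hC)
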